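/- Let A be a positive bounded linear operator on a complex Hilbert space H with ‖A‖ ≤ 1, and let p ≥ 2 be a real number. Then w(A)^{2p} ≤ ‖A^p‖ − ℓ( |A − ‖A‖·1_H|^p ). -/

import Mathlib

open Pointwise

variable {H : Type*} [NormedAddCommGroup H] [InnerProductSpace ℂ H] [CompleteSpace H]

/-- The numerical radius `w(T) = sup { |⟨Tx, x⟩| : ‖x‖ = 1 }`. -/
noncomputable def numRad (T : H →L[ℂ] H) : ℝ :=
  ⨆ x : {x : H // ‖x‖ = 1}, ‖(inner ℂ (T x) x : ℂ)‖

/-- The spectral radius `r(T)` as a real number. -/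
noncomputable def specRad (T : H →L[ℂ] H) : ℝ :=
  (spectralRadius ℂ T).toReal

/-- `ℓ(T) = inf { ‖Tx‖ : ‖x‖ = 1 }`. -/
noncomputable def lowB (T : H →L[ℂ] H) : ℝ :=
  ⨅ x : {x : H // ‖x‖ = 1}, ‖T x‖

/-- The absolute value `|T| = (T*T)^(1/2)`. -/
noncomputable def oAbs (T : H →L[ℂ] H) : H →L[ℂ] H :=
  cfc Real.sqrt (ContinuousLinearMap.adjoint T * T)

/-- Real powers of a (positive) operator via the continuous functional calculus. -/
noncomputable def oPow (T : H →L[ℂ] H) (r : ℝ) : H →L[ℂ] H :=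
  cfc (fun t : ℝ => t ^ r) T

lemma aux_mul_self_eq_cfc {T : H →L[ℂ] H} (hT : IsSelfAdjoint T) :
    T * T = cfc (fun t : ℝ => t * t) T := by
  conv_lhs => rw [← cfc_id' ℝ T hT]
  rw [← cfc_mul _ _ T]

lemma aux_zero_mem_mul_self {T : H →L[ℂ] H} (hT : IsSelfAdjoint T)
    (h0 : (0 : ℝ) ∈ spectrum ℝ T) : (0 : ℝ) ∈ spectrum ℝ (T * T) := by
  have hms := cfc_map_spectrum (R := ℝ) (f := fun t : ℝ => t * t) (a := T) hT (by fun_prop)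
  rw [aux_mul_self_eq_cfc hT, hms]
  exact ⟨0, h0, by simp⟩

/-- A self-adjoint operator with `0` in its (real) spectrum has `ℓ(T) ≤ 0`. -/
lemma aux_lowB_nonpos {T : H →L[ℂ] H} (hT : IsSelfAdjoint T)
    (h0 : (0 : ℝ) ∈ spectrum ℝ T) : lowB T ≤ 0 := by
  by_contra hc
  push_neg at hc
  set c := lowB T with hcdef
  have hub : ∀ x : {x : H // ‖x‖ = 1}, c ≤ ‖T x‖ := fun x =>
    ciInf_le ⟨0, by rintro r ⟨y, rfl⟩; exact norm_nonneg _⟩ x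
  have hbound : ∀ x : H, c * ‖x‖ ≤ ‖T x‖ := by
    intro x
    rcases eq_or_ne x 0 with rfl | hx
    · simp
    · have hn : ‖x‖ ≠ 0 := norm_ne_zero_iff.2 hx
      have h := hub ⟨‖x‖⁻¹ • x, by
        rw [norm_smul, norm_inv, norm_norm, inv_mul_cancel₀ hn]⟩
      simp only [ContinuousLinearMap.map_smul_of_tower, norm_smul, norm_inv, norm_norm] at h
      have h2 := mul_le_mul_of_nonneg_right h (norm_nonneg x)
      calc c * ‖x‖ ≤ ‖x‖⁻¹ * ‖T x‖ * ‖x‖ := h2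
        _ = ‖T x‖ := by field_simp
  -- Build the positive operator T*T - c²
  set D : H →L[ℂ] H := T * T - algebraMap ℝ _ (c * c) with hD
  have hTT : IsSelfAdjoint (T * T) := by
    rw [IsSelfAdjoint, star_mul, hT.star_eq]
  have hDsa : IsSelfAdjoint D :=
    hTT.sub (IsSelfAdjoint.algebraMap _ (star_trivial _))
  have hsymm := ContinuousLinearMap.isSelfAdjoint_iff_isSymmetric.mp hT
  have hDpos : D.IsPositive := by
    refine ⟨ContinuousLinearMap.isSelfAdjoint_iff_isSymmetric.mp hDsa, fun x => ?_⟩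
    rw [ContinuousLinearMap.reApplyInnerSelf_apply]
    have hDx : D x = T (T x) - (c * c) • x := by
      simp [hD, Algebra.algebraMap_eq_smul_one, ContinuousLinearMap.mul_apply]
    have h1 : (inner ℂ (T (T x)) x : ℂ) = inner ℂ (T x) (T x) := hsymm (T x) x
    rw [hDx, inner_sub_left, h1, RCLike.real_smul_eq_coe_smul (K := ℂ) (c * c) x,
      inner_smul_real_left, map_sub, RCLike.smul_re, inner_self_eq_norm_sq,
      inner_self_eq_norm_sq]
    have hb := hbound x
    nlinarith [mul_le_mul hb hb (by positivity : (0:ℝ) ≤ c * ‖x‖) (norm_nonneg (T x)),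
      norm_nonneg x, norm_nonneg (T x), hc.le]
  have hDnonneg : (0 : H →L[ℂ] H) ≤ D :=
    (ContinuousLinearMap.nonneg_iff_isPositive D).mpr hDpos
  -- But -(c*c) is in the spectrum of D
  have hmem : (-(c * c) : ℝ) ∈ spectrum ℝ D := by
    have h0TT : (0 : ℝ) ∈ spectrum ℝ (T * T) := aux_zero_mem_mul_self hT h0
    have hmm : (0 : ℝ) - (c * c) ∈ spectrum ℝ (T * T) - {c * c} :=
      Set.sub_mem_sub h0TT rfl
    rw [spectrum.sub_singleton_eq, zero_sub] at hmm
    rw [hD]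
    exact hmm
  have := spectrum_nonneg_of_nonneg hDnonneg hmem
  nlinarith

theorem numRad_rpow_le_of_positive_contraction
    (A : H →L[ℂ] H) (hA : A.IsPositive) (hA1 : ‖A‖ ≤ 1) (p : ℝ) (hp : 2 ≤ p) :
    numRad A ^ (2 * p) ≤ ‖oPow A p‖ - lowB (oPow (oAbs (A - ‖A‖ • 1)) p) := by
  have hp0 : (0 : ℝ) < p := by linarith
  have h2p0 : (2 * p : ℝ) ≠ 0 := by positivity
  have hcont : Continuous (fun t : ℝ => t ^ p) := Real.continuous_rpow_const hp0.le
  rcases subsingleton_or_nontrivial H with hH | hH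
  · haveI : IsEmpty {x : H // ‖x‖ = 1} := by
      refine ⟨fun x => ?_⟩
      have := x.2
      rw [Subsingleton.elim x.1 0, norm_zero] at this
      exact zero_ne_one this
    have h1 : numRad A = 0 := Real.iSup_of_isEmpty _
    have h2 : lowB (oPow (oAbs (A - ‖A‖ • 1)) p) = 0 := Real.iInf_of_isEmpty _
    rw [h1, h2, Real.zero_rpow h2p0, sub_zero]
    exact norm_nonneg _
  · haveI : Nontrivial (H →L[ℂ] H) := by
      obtain ⟨x, hx⟩ := exists_ne (0 : H)
      exact ⟨1, 0, fun h => hx (by simpa using DFunLike.congr_fun h x)⟩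
    have hsa : IsSelfAdjoint A := hA.isSelfAdjoint
    have hA0 : (0 : H →L[ℂ] H) ≤ A :=
      (ContinuousLinearMap.nonneg_iff_isPositive A).mpr hA
    -- ‖A‖ ∈ spectrum ℝ A
    have hnorm_mem : ‖A‖ ∈ spectrum ℝ A := CStarAlgebra.norm_mem_spectrum_of_nonneg hA0
    -- numRad A ≤ ‖A‖
    have hw0 : 0 ≤ numRad A := Real.iSup_nonneg fun x => norm_nonneg _
    have hwle : numRad A ≤ ‖A‖ := by
      refine Real.iSup_le (fun x => ?_) (norm_nonneg A)
      calc ‖(inner ℂ (A x.1) x.1 : ℂ)‖ ≤ ‖A x.1‖ * ‖x.1‖ := norm_inner_le_norm _ _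
        _ ≤ (‖A‖ * ‖x.1‖) * ‖x.1‖ :=
            mul_le_mul_of_nonneg_right (A.le_opNorm x.1) (norm_nonneg _)
        _ = ‖A‖ := by rw [x.2]; ring
    -- ‖A‖^p ≤ ‖oPow A p‖
    have hap : ‖A‖ ^ p ∈ spectrum ℝ (oPow A p) := by
      have hms := cfc_map_spectrum (R := ℝ) (f := fun t : ℝ => t ^ p) (a := A)
        hsa hcont.continuousOn
      rw [oPow, hms]
      exact ⟨‖A‖, hnorm_mem, rfl⟩
    have hnormAp : ‖A‖ ^ p ≤ ‖oPow A p‖ := by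
      have := spectrum.norm_le_norm_of_mem hap
      rwa [Real.norm_of_nonneg (Real.rpow_nonneg (norm_nonneg A) p)] at this
    -- lowB part : 0 ∈ spectrum of oPow (oAbs M) p
    set M : H →L[ℂ] H := A - ‖A‖ • 1 with hM
    have hMsa : IsSelfAdjoint M := by
      refine hsa.sub ?_
      exact IsSelfAdjoint.smul (star_trivial _) (IsSelfAdjoint.one _)
    have h0M : (0 : ℝ) ∈ spectrum ℝ M := by
      have hmm : ‖A‖ - ‖A‖ ∈ spectrum ℝ A - {‖A‖} := Set.sub_mem_sub hnorm_mem rfl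
      rw [spectrum.sub_singleton_eq, sub_self] at hmm
      rw [hM, ← Algebra.algebraMap_eq_smul_one]
      exact hmm
    have hB : ContinuousLinearMap.adjoint M * M = M * M := by
      rw [hMsa.adjoint_eq]
    have hBsa : IsSelfAdjoint (M * M) := by
      rw [IsSelfAdjoint, star_mul, hMsa.star_eq]
    have h0B : (0 : ℝ) ∈ spectrum ℝ (M * M) := aux_zero_mem_mul_self hMsa h0M
    set S : H →L[ℂ] H := oAbs M with hS
    have hSsa : IsSelfAdjoint S := by
      rw [hS, oAbs]; exact cfc_predicate _ _
    have h0S : (0 : ℝ) ∈ spectrum ℝ S := by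
      have hms := cfc_map_spectrum (R := ℝ) (f := Real.sqrt) (a := M * M)
        hBsa Real.continuous_sqrt.continuousOn
      rw [hS, oAbs, hB, hms]
      exact ⟨0, h0B, Real.sqrt_zero⟩
    have hTsa : IsSelfAdjoint (oPow S p) := by
      rw [oPow]; exact cfc_predicate _ _
    have h0T : (0 : ℝ) ∈ spectrum ℝ (oPow S p) := by
      have hms := cfc_map_spectrum (R := ℝ) (f := fun t : ℝ => t ^ p) (a := S)
        hSsa hcont.continuousOn
      rw [oPow, hms]
      exact ⟨0, h0S, Real.zero_rpow hp0.ne'⟩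
    have hlow : lowB (oPow S p) ≤ 0 := aux_lowB_nonpos hTsa h0T
    -- chain of inequalities
    have h1 : numRad A ^ (2 * p) ≤ ‖A‖ ^ (2 * p) :=
      Real.rpow_le_rpow hw0 hwle (by linarith)
    have h2 : ‖A‖ ^ (2 * p) ≤ ‖A‖ ^ p := by
      rcases eq_or_lt_of_le (norm_nonneg A) with h | h
      · rw [← h, Real.zero_rpow h2p0, Real.zero_rpow hp0.ne']
      · exact Real.rpow_le_rpow_of_exponent_ge h hA1 (by linarith)
    linarith
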